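/- Let w : ℝⁿ → ℝ be a differentiable choice welfare function (monotone, translation invariant, convex) and let V(x) = sup_{y ∈ ℝⁿ} { yᵀx − w(y) } be its convex conjugate. Then for every μ ∈ ℝⁿ, the gradient ∇w(μ) lies in the simplex Δ_{n−1}, satisfies w(μ) = μᵀ∇w(μ) − V(∇w(μ)), and is the unique maximizer of x ↦ μᵀx − V(x) over Δ_{n−1}. -/

import Mathlib

open scoped BigOperators
open MeasureTheory

noncomputable section

/-- The simplex Δ_{n-1} in ℝⁿ. -/
def choiceSimplex (n : ℕ) : Set (Fin n → ℝ) :=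
  {x | (∀ i, 0 ≤ x i) ∧ ∑ i, x i = 1}

/-- A choice welfare function: monotone, translation invariant, convex. -/
def IsCWF {n : ℕ} (w : (Fin n → ℝ) → ℝ) : Prop :=
  (∀ μ₁ μ₂ : Fin n → ℝ, μ₂ ≤ μ₁ → w μ₂ ≤ w μ₁) ∧
  (∀ (μ : Fin n → ℝ) (t : ℝ), w (μ + fun _ => t) = w μ + t) ∧
  ConvexOn ℝ Set.univ w

/-- The convex conjugate V(x) = sup_y { yᵀx − w(y) }, valued in ℝ ∪ {+∞}. -/
def conjFn {n : ℕ} (w : (Fin n → ℝ) → ℝ) (x : Fin n → ℝ) : EReal :=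
  ⨆ y : Fin n → ℝ, ((∑ i, y i * x i - w y : ℝ) : EReal)

/-- The gradient of w at μ, whose i-th component is the partial derivative ∂w/∂μᵢ. -/
def grad {n : ℕ} (w : (Fin n → ℝ) → ℝ) (μ : Fin n → ℝ) : Fin n → ℝ :=
  fun i => fderiv ℝ w μ (Pi.single i 1)

open Filter Topology in
lemma line_hasDerivAt {n : ℕ} {w : (Fin n → ℝ) → ℝ} (hd : Differentiable ℝ w)
    (μ v : Fin n → ℝ) :
    HasDerivAt (fun t : ℝ => w (μ + t • v)) (fderiv ℝ w μ v) 0 := by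
  have hline : HasDerivAt (fun t : ℝ => μ + t • v) v 0 := by
    simpa using ((hasDerivAt_id (0:ℝ)).smul_const v).const_add μ
  have := (hd (μ + (0:ℝ) • v)).hasFDerivAt.comp_hasDerivAt 0 hline
  simpa [Function.comp_def] using this

open Filter Topology in
lemma grad_ineq {n : ℕ} {w : (Fin n → ℝ) → ℝ} (hc : ConvexOn ℝ Set.univ w)
    (hd : Differentiable ℝ w) (μ v : Fin n → ℝ) :
    fderiv ℝ w μ v ≤ w (μ + v) - w μ := by
  set φ : ℝ → ℝ := fun t => w (μ + t • v) with hφdef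
  have hφ : HasDerivAt φ (fderiv ℝ w μ v) 0 := line_hasDerivAt hd μ v
  have htend : Tendsto (slope φ 0) (𝓝[>] 0) (𝓝 (fderiv ℝ w μ v)) :=
    (hasDerivAt_iff_tendsto_slope.mp hφ).mono_left
      (nhdsWithin_mono _ (fun t ht => ne_of_gt ht))
  refine le_of_tendsto htend ?_
  filter_upwards [Ioc_mem_nhdsGT_of_mem (Set.mem_Ico.2 ⟨le_refl (0:ℝ), one_pos⟩)] with t ht
  have h01 : (0:ℝ) < t := ht.1
  have := hc.2 (Set.mem_univ (μ + v)) (Set.mem_univ μ) (le_of_lt h01)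
    (by linarith [ht.2] : (0:ℝ) ≤ 1 - t) (by ring)
  have hpt : t • (μ + v) + (1 - t) • μ = μ + t • v := by
    funext j; simp [Pi.add_apply, Pi.smul_apply]; ring
  rw [hpt] at this
  have : φ t ≤ t * w (μ + v) + (1 - t) * w μ := by simpa [smul_eq_mul] using this
  have hφ0 : φ 0 = w μ := by simp [hφdef]
  rw [slope_def_field]
  rw [sub_zero, div_le_iff₀ h01, hφ0]
  nlinarith [this]

lemma fderiv_eq_sum {n : ℕ} (w : (Fin n → ℝ) → ℝ) (μ v : Fin n → ℝ) :
    fderiv ℝ w μ v = ∑ i, v i * grad w μ i := by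
  have hv : v = ∑ i, (v i) • (Pi.single i (1:ℝ) : Fin n → ℝ) := by
    funext j
    simp [Pi.single_apply, Finset.sum_apply]
  calc fderiv ℝ w μ v
      = fderiv ℝ w μ (∑ i, (v i) • (Pi.single i (1:ℝ) : Fin n → ℝ)) := by rw [← hv]
    _ = ∑ i, v i * grad w μ i := by
        rw [map_sum]
        simp [grad, smul_eq_mul]

lemma subgrad_eq_grad {n : ℕ} {w : (Fin n → ℝ) → ℝ}
    (hd : Differentiable ℝ w) (μ x : Fin n → ℝ)
    (hsub : ∀ y, ∑ i, (y i - μ i) * x i ≤ w y - w μ) :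
    x = grad w μ := by
  funext i
  set v : Fin n → ℝ := Pi.single i (1:ℝ) with hv
  have hS : ∀ t : ℝ, ∑ j, (t • v) j * x j = t * x i := by
    intro t
    simp [hv, Pi.single_apply, smul_eq_mul, mul_ite, Finset.mul_sum]
  set ψ : ℝ → ℝ := fun t => w (μ + t • v) - t * x i with hψ
  have hψd : HasDerivAt ψ (fderiv ℝ w μ v - x i) 0 := by
    simpa [Pi.sub_def] using (line_hasDerivAt hd μ v).sub ((hasDerivAt_id (0:ℝ)).mul_const (x i))
  have hmin : IsLocalMin ψ 0 := by
    have hmin' : IsMinOn ψ Set.univ 0 := by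
      intro t _
      show ψ 0 ≤ ψ t
      have h1 := hsub (μ + t • v)
      have h2 : ∑ j, ((μ + t • v) j - μ j) * x j = t * x i := by
        simpa using hS t
      simp only [hψ, zero_smul, add_zero, zero_mul, sub_zero]
      nlinarith [h1, h2]
    exact hmin'.isLocalMin Filter.univ_mem
  have := hmin.hasDerivAt_eq_zero hψd
  have h4 := fderiv_eq_sum w μ v
  have h5 : ∑ j, v j * grad w μ j = grad w μ i := by
    simp [hv, Pi.single_apply, ite_mul, Finset.sum_ite_eq]
  linarith [h4, h5, this]

theorem stmt_5 (n : ℕ) (hn : 1 ≤ n) (w : (Fin n → ℝ) → ℝ)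
    (hw : IsCWF w) (hdiff : Differentiable ℝ w) (μ : Fin n → ℝ) :
    grad w μ ∈ choiceSimplex n ∧
    (w μ : EReal) = ((∑ i, μ i * grad w μ i : ℝ) : EReal) - conjFn w (grad w μ) ∧
    (∀ x ∈ choiceSimplex n,
      ((∑ i, μ i * x i : ℝ) : EReal) - conjFn w x ≤ (w μ : EReal)) ∧
    (∀ x ∈ choiceSimplex n,
      ((∑ i, μ i * x i : ℝ) : EReal) - conjFn w x = (w μ : EReal) → x = grad w μ) := by
  obtain ⟨hmono, htrans, hconv⟩ := hw
  -- membership in simplex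
  have hnonneg : ∀ i, 0 ≤ grad w μ i := by
    intro i
    have h1 := grad_ineq hconv hdiff μ (-(Pi.single i (1:ℝ)))
    have h2 : w (μ + -(Pi.single i (1:ℝ))) ≤ w μ := by
      apply hmono
      intro j
      simp only [Pi.add_apply, Pi.neg_apply, Pi.single_apply]
      split <;> simp
    have h3 : fderiv ℝ w μ (-(Pi.single i (1:ℝ))) = -grad w μ i := by
      rw [map_neg]; rfl
    rw [h3] at h1
    linarith
  have hsum : ∑ i, grad w μ i = 1 := by
    have he : fderiv ℝ w μ (fun _ => (1:ℝ)) = ∑ i, grad w μ i := by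
      simpa using fderiv_eq_sum w μ (fun _ => (1:ℝ))
    have hub := grad_ineq hconv hdiff μ (fun _ => (1:ℝ))
    rw [htrans μ 1, he] at hub
    have hlb := grad_ineq hconv hdiff μ (fun _ => (-1:ℝ))
    rw [htrans μ (-1)] at hlb
    have hneg : fderiv ℝ w μ (fun _ => (-1:ℝ)) = -(∑ i, grad w μ i) := by
      have : (fun _ : Fin n => (-1:ℝ)) = -(fun _ => (1:ℝ)) := by funext j; simp
      rw [this, map_neg, he]
    rw [hneg] at hlb
    linarith
  have hsimplex : grad w μ ∈ choiceSimplex n := ⟨hnonneg, hsum⟩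
  refine ⟨hsimplex, ?_, ?_, ?_⟩
  · -- value identity
    have hconj : conjFn w (grad w μ) = ((∑ i, μ i * grad w μ i - w μ : ℝ) : EReal) := by
      apply le_antisymm
      · apply iSup_le
        intro y
        rw [EReal.coe_le_coe_iff]
        have h := grad_ineq hconv hdiff μ (y - μ)
        rw [fderiv_eq_sum] at h
        have hy : μ + (y - μ) = y := by ring
        rw [hy] at h
        have hexp : ∑ i, (y - μ) i * grad w μ i
            = ∑ i, y i * grad w μ i - ∑ i, μ i * grad w μ i := by
          rw [← Finset.sum_sub_distrib]
          exact Finset.sum_congr rfl (fun i _ => by simp [sub_mul])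
        rw [hexp] at h
        linarith
      · exact le_iSup (fun y => ((∑ i, y i * grad w μ i - w y : ℝ) : EReal)) μ
    rw [hconj, ← EReal.coe_sub, EReal.coe_eq_coe_iff]
    ring
  · -- inequality
    intro x hx
    have hle : ((∑ i, μ i * x i - w μ : ℝ) : EReal) ≤ conjFn w x :=
      le_iSup (fun y => ((∑ i, y i * x i - w y : ℝ) : EReal)) μ
    calc ((∑ i, μ i * x i : ℝ) : EReal) - conjFn w x
        ≤ ((∑ i, μ i * x i : ℝ) : EReal) - ((∑ i, μ i * x i - w μ : ℝ) : EReal) :=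
          EReal.sub_le_sub (le_refl _) hle
      _ = (w μ : EReal) := by
          rw [← EReal.coe_sub, EReal.coe_eq_coe_iff]; ring
  · -- uniqueness
    intro x hx heq
    have hle : ((∑ i, μ i * x i - w μ : ℝ) : EReal) ≤ conjFn w x :=
      le_iSup (fun y => ((∑ i, y i * x i - w y : ℝ) : EReal)) μ
    have hne_bot : conjFn w x ≠ ⊥ := fun hb => by
      rw [hb] at hle; exact (EReal.coe_ne_bot _) (le_bot_iff.1 hle)
    have hne_top : conjFn w x ≠ ⊤ := by
      intro htop
      rw [htop, EReal.sub_top] at heq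
      exact (EReal.bot_ne_coe _) heq
    set s : ℝ := (conjFn w x).toReal with hs
    have hcs : (s : EReal) = conjFn w x := EReal.coe_toReal hne_top hne_bot
    rw [← hcs, ← EReal.coe_sub, EReal.coe_eq_coe_iff] at heq
    have hsub : ∀ y, ∑ i, (y i - μ i) * x i ≤ w y - w μ := by
      intro y
      have h : ((∑ i, y i * x i - w y : ℝ) : EReal) ≤ conjFn w x :=
        le_iSup (fun y => ((∑ i, y i * x i - w y : ℝ) : EReal)) y
      rw [← hcs, EReal.coe_le_coe_iff] at h
      have hexp : ∑ i, (y i - μ i) * x i = ∑ i, y i * x i - ∑ i, μ i * x i := by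
        rw [← Finset.sum_sub_distrib]
        exact Finset.sum_congr rfl (fun i _ => by simp [sub_mul])
      rw [hexp]
      linarith
    exact subgrad_eq_grad hdiff μ x hsub
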